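/- arXiv:1803.08081 — 2 statements merged into one kernel-verified Lean document; each statement's English description precedes it below -/
import Mathlib

section
/- For every j ≥ 1 and every q ≥ 0, ℙ[ d^e_j(0) = q | 0 is successful ] = ℙ[ l_j(0) = q | 0 is successful ], where d^e_j(0) = #{m ∈ ℤ : f^j(m) = 0 and each of m, f(m), …, f^{j−1}(m) is ephemeral} is the number of direct ephemeral descendants of degree j of 0, and l_j(0) = #{m ∈ ℤ : f^j(m) = f^j(0) and f^{j−1}(m) ≠ f^{j−1}(0)} is the number of cousins of degree exactly j of 0. -/
open MeasureTheory ProbabilityTheory Filter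
open scoped ENNReal ProbabilityTheory

/-- The random map `f(n) = n + a_n` generating the family tree `T^f`. -/
def genMap {Ω : Type*} (a : ℤ → Ω → ℕ) (ω : Ω) : ℤ → ℤ :=
  fun n => n + (a n ω : ℤ)

/-- The set of descendants (of all degrees) of `n`: `D(n) = {m : f^j(m) = n, some j ≥ 0}`. -/
def descendants {Ω : Type*} (a : ℤ → Ω → ℕ) (ω : Ω) (n : ℤ) : Set ℤ :=
  {m : ℤ | ∃ j : ℕ, (genMap a ω)^[j] m = n}

/-- `n` is ephemeral: it has finitely many descendants. -/
def Ephemeral {Ω : Type*} (a : ℤ → Ω → ℕ) (ω : Ω) (n : ℤ) : Prop :=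
  (descendants a ω n).Finite

/-- The number of direct ephemeral descendants of degree `j` of `0`:
`d^e_j(0) = #{m : f^j(m) = 0 and m, f(m), …, f^{j-1}(m) are all ephemeral}`. -/
noncomputable def directEphemeralDegree {Ω : Type*} (a : ℤ → Ω → ℕ) (ω : Ω) (j : ℕ) : ℕ :=
  Set.ncard {m : ℤ | (genMap a ω)^[j] m = 0 ∧
    ∀ k : ℕ, k < j → Ephemeral a ω ((genMap a ω)^[k] m)}

/-- The number of cousins of degree exactly `j` of `0`:
`l_j(0) = #{m : f^j(m) = f^j(0) and f^{j-1}(m) ≠ f^{j-1}(0)}`. -/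
noncomputable def cousinsDegree {Ω : Type*} (a : ℤ → Ω → ℕ) (ω : Ω) (j : ℕ) : ℕ :=
  Set.ncard {m : ℤ | (genMap a ω)^[j] m = (genMap a ω)^[j] 0 ∧
    (genMap a ω)^[j - 1] m ≠ (genMap a ω)^[j - 1] 0}

namespace DEC

abbrev XX := ℤ → ℕ

def bb : ℤ → XX → ℕ := fun n x => x n

/-- shift of the environment -/
def sh (k : ℤ) (x : XX) : XX := fun n => x (n + k)

def succ (x : XX) (n : ℤ) : Prop := (descendants bb x n).Infinite

lemma genMap_sh (k : ℤ) (x : XX) (m : ℤ) :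
    genMap bb (sh k x) m = genMap bb x (m + k) - k := by
  simp [genMap, bb, sh]; ring

lemma iter_sh (k : ℤ) (x : XX) (j : ℕ) (m : ℤ) :
    (genMap bb (sh k x))^[j] m = (genMap bb x)^[j] (m + k) - k := by
  induction j generalizing m with
  | zero => simp
  | succ j ih =>
    rw [Function.iterate_succ_apply, Function.iterate_succ_apply, genMap_sh, ih]
    congr 1
    congr 1
    ring

lemma mem_desc_sh (k : ℤ) (x : XX) (n m : ℤ) :
    m ∈ descendants bb (sh k x) n ↔ m + k ∈ descendants bb x (n + k) := by
  simp only [descendants, Set.mem_setOf_eq]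
  constructor
  · rintro ⟨j, hj⟩; exact ⟨j, by rw [iter_sh] at hj; omega⟩
  · rintro ⟨j, hj⟩; exact ⟨j, by rw [iter_sh, hj]; ring⟩

lemma succ_sh (k : ℤ) (x : XX) (n : ℤ) :
    succ (sh k x) n ↔ succ x (n + k) := by
  unfold succ
  have h : descendants bb (sh k x) n = (fun m => m - k) '' descendants bb x (n + k) := by
    ext m
    rw [mem_desc_sh]
    constructor
    · intro h; exact ⟨m + k, h, by ring⟩
    · rintro ⟨u, hu, rfl⟩; simpa using hu
  rw [h, Set.infinite_image_iff (Function.Injective.injOn (fun u v h => by omega))]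

lemma desc_mono (x : XX) (m : ℤ) (i : ℕ) :
    descendants bb x m ⊆ descendants bb x ((genMap bb x)^[i] m) := by
  rintro y ⟨j, hj⟩
  exact ⟨i + j, by rw [Function.iterate_add_apply, hj]⟩

lemma succ_iter {x : XX} {m : ℤ} (h : succ x m) (i : ℕ) :
    succ x ((genMap bb x)^[i] m) :=
  Set.Infinite.mono (desc_mono x m i) h

lemma mem_self_desc (x : XX) (n : ℤ) : n ∈ descendants bb x n := ⟨0, rfl⟩

/-- children of n -/
def children (x : XX) (n : ℤ) : Set ℤ := {m | genMap bb x m = n}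

lemma exists_succ_child {x : XX} {n : ℤ} (hfin : (children x n).Finite)
    (h : succ x n) : ∃ c, genMap bb x c = n ∧ succ x c := by
  by_contra hc
  push_neg at hc
  have hsub : descendants bb x n ⊆ {n} ∪ ⋃ c ∈ children x n, descendants bb x c := by
    rintro m ⟨j, hj⟩
    match j with
    | 0 => exact Or.inl hj
    | Nat.succ i =>
      right
      refine Set.mem_biUnion (s := children x n) (show (genMap bb x)^[i] m ∈ children x n from ?_)
        ⟨i, rfl⟩
      simpa [children, ← Function.iterate_succ_apply'] using hj
  have hf : ({n} ∪ ⋃ c ∈ children x n, descendants bb x c).Finite := by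
    refine (Set.finite_singleton n).union (hfin.biUnion fun c hc' => ?_)
    have := hc c hc'
    exact Set.not_infinite.mp (hc c hc')
  exact (h.mono hsub) hf

lemma exists_succ_desc {x : XX} (hfin : ∀ p, (children x p).Finite) {n : ℤ}
    (h : succ x n) (i : ℕ) : ∃ m, (genMap bb x)^[i] m = n ∧ succ x m := by
  induction i with
  | zero => exact ⟨n, rfl, h⟩
  | succ i ih =>
    obtain ⟨m, hm, hsm⟩ := ih
    obtain ⟨c, hc, hsc⟩ := exists_succ_child (hfin m) hsm
    exact ⟨c, by rw [Function.iterate_succ_apply, hc, hm], hsc⟩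

end DEC

namespace DEC

lemma meas_app {p : XX → ℤ} (hp : Measurable p) :
    Measurable fun x => genMap bb x (p x) := by
  apply measurable_to_countable'
  intro c
  have h : (fun x => genMap bb x (p x)) ⁻¹' {c} =
      ⋃ (d : ℤ), (p ⁻¹' {d}) ∩ ⋃ (e : ℕ) (_ : d + (e : ℤ) = c), (fun x : XX => x d) ⁻¹' {e} := by
    ext x
    simp only [Set.mem_setOf_eq, Set.mem_iUnion, Set.mem_inter_iff, Set.mem_preimage,
      Set.mem_singleton_iff, genMap, bb]
    constructor
    · intro h; exact ⟨p x, rfl, x (p x), by omega, rfl⟩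
    · rintro ⟨d, rfl, e, he, hxe⟩; omega
  rw [h]
  exact MeasurableSet.iUnion fun d => ((hp (measurableSet_singleton d)).inter
    (MeasurableSet.iUnion fun e => MeasurableSet.iUnion fun _ =>
      measurable_pi_apply d (measurableSet_singleton e)))

lemma iter_meas (j : ℕ) (m : ℤ) : Measurable fun x : XX => (genMap bb x)^[j] m := by
  induction j with
  | zero => simpa using measurable_const
  | succ j ih =>
    have : (fun x : XX => (genMap bb x)^[j + 1] m)
        = fun x => genMap bb x ((genMap bb x)^[j] m) := by
      funext x; rw [Function.iterate_succ_apply']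
    rw [this]
    exact meas_app ih

lemma meas_infinite {M : ℤ → Set XX} (hM : ∀ m, MeasurableSet (M m)) :
    MeasurableSet {x | {m : ℤ | x ∈ M m}.Infinite} := by
  have h : {x | {m : ℤ | x ∈ M m}.Infinite}
      = (⋃ (F : Finset ℤ), ⋂ (m : ℤ) (_ : m ∉ F), (M m)ᶜ)ᶜ := by
    ext x
    simp only [Set.mem_setOf_eq, Set.mem_compl_iff, Set.mem_iUnion, Set.mem_iInter, not_exists]
    constructor
    · intro h F hF
      obtain ⟨m, hm, hmF⟩ := Set.Infinite.exists_notMem_finset h F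
      exact hF m hmF hm
    · intro h
      by_contra hfin
      rw [Set.not_infinite] at hfin
      exact h hfin.toFinset fun m hm hx => hm (by simpa using hx)
  rw [h]
  exact (MeasurableSet.iUnion fun F => MeasurableSet.iInter fun m =>
    MeasurableSet.iInter fun _ => (hM m).compl).compl

lemma meas_succ (n : ℤ) : MeasurableSet {x : XX | succ x n} := by
  have h : {x : XX | succ x n}
      = {x | {m : ℤ | x ∈ ⋃ j : ℕ, (fun y : XX => (genMap bb y)^[j] m) ⁻¹' {n}}.Infinite} := by
    ext x
    simp only [Set.mem_setOf_eq, succ, descendants, Set.mem_iUnion, Set.mem_preimage,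
      Set.mem_singleton_iff]
  rw [h]
  exact meas_infinite fun m => MeasurableSet.iUnion fun j =>
    iter_meas j m (measurableSet_singleton n)

lemma meas_ncard {M : ℤ → Set XX} (hM : ∀ m, MeasurableSet (M m)) (q : ℕ) :
    MeasurableSet {x | Set.ncard {m : ℤ | x ∈ M m} = q} := by
  classical
  have h : {x | Set.ncard {m : ℤ | x ∈ M m} = q}
      = (⋃ (F : Finset ℤ) (_ : F.card = q), ⋂ (m : ℤ),
          (if m ∈ F then M m else (M m)ᶜ))
        ∪ ({x | {m : ℤ | x ∈ M m}.Infinite} ∩ {_x : XX | q = 0}) := by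
    ext x
    simp only [Set.mem_union, Set.mem_iUnion, Set.mem_iInter, Set.mem_inter_iff,
      Set.mem_setOf_eq]
    constructor
    · intro h
      by_cases hfin : {m : ℤ | x ∈ M m}.Finite
      · left
        refine ⟨hfin.toFinset, ?_, fun m => ?_⟩
        · rw [← Set.ncard_coe_finset, Set.Finite.coe_toFinset]; exact h
        · by_cases hm : m ∈ hfin.toFinset
          · rw [if_pos hm]; exact (Set.Finite.mem_toFinset hfin).mp hm
          · rw [if_neg hm]; exact fun hx => hm ((Set.Finite.mem_toFinset hfin).mpr hx)
      · right
        rw [← Set.not_infinite, not_not] at hfin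
        exact ⟨hfin, by rw [← h, hfin.ncard]⟩
    · rintro (⟨F, hcard, hF⟩ | ⟨hinf, h0⟩)
      · have : {m : ℤ | x ∈ M m} = ↑F := by
          ext m
          simp only [Set.mem_setOf_eq, Finset.mem_coe]
          constructor
          · intro hx
            by_contra hm
            have := hF m
            rw [if_neg hm] at this
            exact this hx
          · intro hm
            have := hF m
            rwa [if_pos hm] at this
        rw [this, Set.ncard_coe_finset, hcard]
      · rw [hinf.ncard, h0]
  rw [h]
  refine MeasurableSet.union
    (MeasurableSet.iUnion fun F => MeasurableSet.iUnion fun _ =>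
      MeasurableSet.iInter fun m => ?_)
    ((meas_infinite hM).inter (MeasurableSet.const _))
  by_cases hm : m ∈ F <;> simp only [hm, if_true, if_false]
  exacts [hM m, (hM m).compl]

lemma meas_eph (i : ℕ) (m : ℤ) :
    MeasurableSet {x : XX | Ephemeral bb x ((genMap bb x)^[i] m)} := by
  have h : {x : XX | Ephemeral bb x ((genMap bb x)^[i] m)}
      = ⋃ (c : ℤ), ((fun x : XX => (genMap bb x)^[i] m) ⁻¹' {c}) ∩ {x | succ x c}ᶜ := by
    ext x
    simp only [Set.mem_setOf_eq, Set.mem_iUnion, Set.mem_inter_iff, Set.mem_preimage,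
      Set.mem_singleton_iff, Set.mem_compl_iff, succ, Ephemeral]
    constructor
    · intro h; exact ⟨_, rfl, Set.not_infinite.mpr h⟩
    · rintro ⟨c, hc, h⟩; rw [hc]; exact Set.not_infinite.mp h
  rw [h]
  exact MeasurableSet.iUnion fun c =>
    (iter_meas i m (measurableSet_singleton c)).inter (meas_succ c).compl

lemma meas_dE (j q : ℕ) : MeasurableSet {x : XX | directEphemeralDegree bb x j = q} := by
  have h : {x : XX | directEphemeralDegree bb x j = q}
      = {x | Set.ncard {m : ℤ | x ∈ ((fun y : XX => (genMap bb y)^[j] m) ⁻¹' {0}) ∩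
          ⋂ (k : ℕ) (_ : k < j), {y : XX | Ephemeral bb y ((genMap bb y)^[k] m)}} = q} := by
    ext x
    simp only [directEphemeralDegree, Set.mem_setOf_eq, Set.mem_inter_iff, Set.mem_preimage,
      Set.mem_singleton_iff, Set.mem_iInter]
  rw [h]
  exact meas_ncard (fun m => (iter_meas j m (measurableSet_singleton 0)).inter
    (MeasurableSet.iInter fun k => MeasurableSet.iInter fun _ => meas_eph k m)) q

lemma meas_cous (j q : ℕ) : MeasurableSet {x : XX | cousinsDegree bb x j = q} := by
  have h : {x : XX | cousinsDegree bb x j = q}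
      = {x | Set.ncard {m : ℤ | x ∈
          {y : XX | (genMap bb y)^[j] m = (genMap bb y)^[j] 0} ∩
          {y : XX | (genMap bb y)^[j-1] m = (genMap bb y)^[j-1] 0}ᶜ} = q} := by
    ext x
    simp only [cousinsDegree, Set.mem_setOf_eq, Set.mem_inter_iff, Set.mem_compl_iff]
  rw [h]
  refine meas_ncard (fun m => MeasurableSet.inter ?_ (MeasurableSet.compl ?_)) q
  · have : {y : XX | (genMap bb y)^[j] m = (genMap bb y)^[j] 0}
        = ⋃ (c : ℤ), ((fun y : XX => (genMap bb y)^[j] m) ⁻¹' {c}) ∩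
            ((fun y : XX => (genMap bb y)^[j] 0) ⁻¹' {c}) := by
      ext y; simp only [Set.mem_setOf_eq, Set.mem_iUnion, Set.mem_inter_iff, Set.mem_preimage,
        Set.mem_singleton_iff]
      constructor
      · intro h; exact ⟨_, h, rfl⟩
      · rintro ⟨c, h1, h2⟩; rw [h1, h2]
    rw [this]
    exact MeasurableSet.iUnion fun c => (iter_meas j m (measurableSet_singleton c)).inter
      (iter_meas j 0 (measurableSet_singleton c))
  · have : {y : XX | (genMap bb y)^[j-1] m = (genMap bb y)^[j-1] 0}
        = ⋃ (c : ℤ), ((fun y : XX => (genMap bb y)^[j-1] m) ⁻¹' {c}) ∩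
            ((fun y : XX => (genMap bb y)^[j-1] 0) ⁻¹' {c}) := by
      ext y; simp only [Set.mem_setOf_eq, Set.mem_iUnion, Set.mem_inter_iff, Set.mem_preimage,
        Set.mem_singleton_iff]
      constructor
      · intro h; exact ⟨_, h, rfl⟩
      · rintro ⟨c, h1, h2⟩; rw [h1, h2]
    rw [this]
    exact MeasurableSet.iUnion fun c => (iter_meas (j-1) m (measurableSet_singleton c)).inter
      (iter_meas (j-1) 0 (measurableSet_singleton c))

lemma meas_sh (k : ℤ) : Measurable (sh k) :=
  measurable_pi_lambda _ fun n => measurable_pi_apply (n + k)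

end DEC

namespace DEC

def Cyl : Set (Set XX) := {S | ∃ (F : Finset ℤ) (g : ℤ → ℕ), S = {x | ∀ i ∈ F, x i = g i}}

lemma isPiSystem_Cyl : IsPiSystem Cyl := by
  rintro s ⟨F1, g1, rfl⟩ t ⟨F2, g2, rfl⟩ hne
  obtain ⟨x₀, hx1, hx2⟩ := hne
  refine ⟨F1 ∪ F2, x₀, ?_⟩
  ext x
  simp only [Set.mem_inter_iff, Set.mem_setOf_eq, Finset.mem_union]
  constructor
  · rintro ⟨h1, h2⟩ i hi
    rcases hi with hi | hi
    · rw [h1 i hi]; exact (hx1 i hi).symm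
    · rw [h2 i hi]; exact (hx2 i hi).symm
  · intro h
    exact ⟨fun i hi => by rw [h i (Or.inl hi)]; exact hx1 i hi,
      fun i hi => by rw [h i (Or.inr hi)]; exact hx2 i hi⟩

lemma cyl_measurableSet {F : Finset ℤ} {g : ℤ → ℕ} :
    MeasurableSet {x : XX | ∀ i ∈ F, x i = g i} := by
  have h : {x : XX | ∀ i ∈ F, x i = g i} = ⋂ (i : ℤ) (_ : i ∈ F), (fun x : XX => x i) ⁻¹' {g i} := by
    ext x; simp
  rw [h]
  exact MeasurableSet.iInter fun i => MeasurableSet.iInter fun _ =>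
    measurable_pi_apply i (measurableSet_singleton _)

lemma generateFrom_Cyl : (MeasurableSpace.pi : MeasurableSpace XX)
    = MeasurableSpace.generateFrom Cyl := by
  refine le_antisymm ?_ ?_
  · refine iSup_le fun i => ?_
    intro s hs
    rw [MeasurableSpace.measurableSet_comap] at hs
    obtain ⟨t, -, rfl⟩ := hs
    have h : (fun x : XX => x i) ⁻¹' t = ⋃ c ∈ t, (fun x : XX => x i) ⁻¹' {c} := by
      ext x; simp
    rw [h]
    refine MeasurableSet.biUnion t.to_countable fun c _ => ?_
    exact MeasurableSpace.measurableSet_generateFrom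
      ⟨{i}, fun _ => c, by ext x; simp⟩
  · refine MeasurableSpace.generateFrom_le ?_
    rintro s ⟨F, g, rfl⟩
    exact cyl_measurableSet

section Meas

variable {Ω : Type*} [MeasurableSpace Ω] (P : Measure Ω) [IsProbabilityMeasure P]
  (a : ℤ → Ω → ℕ)

def AA : Ω → XX := fun ω n => a n ω

noncomputable def mu : Measure XX := P.map (AA a)

variable (hmeas : ∀ n, Measurable (a n))
  (hindep : iIndepFun a P)
  (hident : ∀ n, Measure.map (a n) P = Measure.map (a 0) P)

include hmeas hindep hident

omit hindep hident in
lemma meas_AA : Measurable (AA a) :=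
  measurable_pi_lambda _ fun n => hmeas n

omit hindep hident in
lemma mu_prob : IsProbabilityMeasure (mu P a) :=
  Measure.isProbabilityMeasure_map (meas_AA a hmeas).aemeasurable

omit hindep in
lemma marg_eq (m : ℤ) (c : ℕ) : P (a m ⁻¹' {c}) = P (a 0 ⁻¹' {c}) := by
  have h1 : P (a m ⁻¹' {c}) = Measure.map (a m) P {c} :=
    (Measure.map_apply (hmeas m) (measurableSet_singleton c)).symm
  have h2 : P (a 0 ⁻¹' {c}) = Measure.map (a 0) P {c} :=
    (Measure.map_apply (hmeas 0) (measurableSet_singleton c)).symm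
  rw [h1, h2, hident m]

lemma cyl_apply (F : Finset ℤ) (g : ℤ → ℕ) :
    mu P a {x | ∀ i ∈ F, x i = g i} = ∏ i ∈ F, P (a 0 ⁻¹' {g i}) := by
  rw [mu, Measure.map_apply (meas_AA a hmeas) cyl_measurableSet]
  have h : AA a ⁻¹' {x | ∀ i ∈ F, x i = g i} = ⋂ i ∈ F, a i ⁻¹' {g i} := by
    ext ω; simp [AA]
  rw [h, hindep.measure_inter_preimage_eq_mul F (sets := fun i => {g i})
    (fun i _ => measurableSet_singleton _)]
  exact Finset.prod_congr rfl fun i _ => marg_eq P a hmeas hident i (g i)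

lemma map_sh (k : ℤ) : Measure.map (sh k) (mu P a) = mu P a := by
  haveI := mu_prob P a hmeas
  haveI : IsProbabilityMeasure (Measure.map (sh k) (mu P a)) :=
    Measure.isProbabilityMeasure_map (meas_sh k).aemeasurable
  refine ext_of_generate_finite Cyl generateFrom_Cyl isPiSystem_Cyl ?_ (by simp)
  rintro s ⟨F, g, rfl⟩
  rw [Measure.map_apply (meas_sh k) cyl_measurableSet]
  have h : sh k ⁻¹' {x : XX | ∀ i ∈ F, x i = g i}
      = {x : XX | ∀ i ∈ F.image (· + k), x i = g (i - k)} := by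
    ext x
    simp only [Set.mem_preimage, Set.mem_setOf_eq, sh, Finset.mem_image]
    constructor
    · rintro h i ⟨i', hi', rfl⟩
      rw [show i' + k - k = i' by ring]
      exact h i' hi'
    · intro h i hi
      have := h (i + k) ⟨i, hi, rfl⟩
      rwa [show i + k - k = i by ring] at this
  rw [h, cyl_apply P a hmeas hindep hident, cyl_apply P a hmeas hindep hident]
  rw [Finset.prod_image (fun i _ i' _ h => by omega)]
  exact Finset.prod_congr rfl fun i _ => by rw [show i + k - k = i by ring]

lemma mu_inv (k : ℤ) {B : Set XX} (hB : MeasurableSet B) :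
    mu P a (sh k ⁻¹' B) = mu P a B := by
  conv_rhs => rw [← map_sh P a hmeas hindep hident k]
  rw [Measure.map_apply (meas_sh k) hB]

lemma mu_single (m : ℤ) (c : ℕ) : mu P a {x : XX | x m = c} = P (a 0 ⁻¹' {c}) := by
  have h : {x : XX | x m = c} = {x : XX | ∀ i ∈ ({m} : Finset ℤ), x i = (fun _ => c) i} := by
    ext x; simp
  rw [h, cyl_apply P a hmeas hindep hident, Finset.prod_singleton]

lemma tsum_marg : ∑' (c : ℕ), P (a 0 ⁻¹' {c}) = 1 := by
  rw [← measure_iUnion (fun c c' hcc' => Set.disjoint_left.mpr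
      (fun ω hc hc' => hcc' (by simp at hc hc'; omega)))
      (fun c => (hmeas 0) (measurableSet_singleton c))]
  have h : ⋃ (c : ℕ), a 0 ⁻¹' {c} = Set.univ := by
    ext ω; simp
  rw [h, measure_univ]

end Meas

end DEC

namespace DEC

def S0 : Set XX := {x | succ x 0}

lemma meas_S0 : MeasurableSet S0 := meas_succ 0

def Fm (j : ℕ) (m : ℤ) : Set XX :=
  {x | succ x m} ∩ (fun x : XX => (genMap bb x)^[j] m) ⁻¹' {0}

lemma mem_Fm {j : ℕ} {m : ℤ} {x : XX} :
    x ∈ Fm j m ↔ succ x m ∧ (genMap bb x)^[j] m = 0 := Iff.rfl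

lemma meas_Fm (j : ℕ) (m : ℤ) : MeasurableSet (Fm j m) :=
  (meas_succ m).inter (iter_meas j m (measurableSet_singleton 0))

lemma Fm_subset_S0 {j : ℕ} {m : ℤ} : Fm j m ⊆ S0 := by
  rintro x ⟨hs, hit⟩
  rw [Set.mem_preimage, Set.mem_singleton_iff] at hit
  have h := succ_iter hs j
  rw [hit] at h
  exact h

def Em (j : ℕ) (m : ℤ) : Set XX :=
  S0 ∩ (fun x : XX => (genMap bb x)^[j] 0) ⁻¹' {-m}

lemma meas_Em (j : ℕ) (m : ℤ) : MeasurableSet (Em j m) :=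
  meas_S0.inter (iter_meas j 0 (measurableSet_singleton _))

lemma Fm_sh (j : ℕ) (m : ℤ) : Fm j m = sh m ⁻¹' Em j m := by
  ext x
  simp only [mem_Fm, Set.mem_preimage, Em, S0, Set.mem_inter_iff, Set.mem_setOf_eq,
    Set.mem_singleton_iff, succ_sh, zero_add, iter_sh]
  constructor
  · rintro ⟨hs, hit⟩; exact ⟨hs, by rw [hit]; ring⟩
  · rintro ⟨hs, hit⟩; exact ⟨hs, by omega⟩

def G0 : Set XX := {x | ∀ n : ℤ, (children x n).Finite}

lemma meas_chInf (n : ℤ) : MeasurableSet {x : XX | (children x n).Infinite} := by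
  have h : {x : XX | (children x n).Infinite}
      = {x | {m : ℤ | x ∈ (fun y : XX => (genMap bb y)^[1] m) ⁻¹' {n}}.Infinite} := by
    ext x
    simp only [Set.mem_setOf_eq, Set.mem_preimage, Set.mem_singleton_iff,
      Function.iterate_one, children]
  rw [h]
  exact meas_infinite fun m => iter_meas 1 m (measurableSet_singleton n)

lemma meas_G0 : MeasurableSet G0 := by
  have h : G0 = (⋃ n : ℤ, {x : XX | (children x n).Infinite})ᶜ := by
    ext x
    simp only [G0, Set.mem_setOf_eq, Set.mem_compl_iff, Set.mem_iUnion, not_exists,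
      Set.not_infinite]
  rw [h]
  exact (MeasurableSet.iUnion fun n => meas_chInf n).compl

section Meas

variable {Ω : Type*} [MeasurableSpace Ω] (P : Measure Ω) [IsProbabilityMeasure P]
  (a : ℤ → Ω → ℕ)
  (hmeas : ∀ n, Measurable (a n))
  (hindep : iIndepFun a P)
  (hident : ∀ n, Measure.map (a n) P = Measure.map (a 0) P)

include hmeas hindep hident

lemma chInf_null (n : ℤ) : mu P a {x : XX | (children x n).Infinite} = 0 := by
  set c : ℕ → ℝ≥0∞ := fun k => P (a 0 ⁻¹' {k}) with hc
  have hctot : ∑' k, c k ≠ ∞ := by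
    rw [hc, tsum_marg P a hmeas hindep hident]; exact ENNReal.one_ne_top
  have hbound : ∀ N : ℕ, mu P a {x : XX | (children x n).Infinite}
      ≤ ∑' i : ℕ, c (i + (N + 1)) := by
    intro N
    have hsub : {x : XX | (children x n).Infinite}
        ⊆ ⋃ i : ℕ, {x : XX | x (n - ((N + i + 1 : ℕ) : ℤ)) = N + i + 1} := by
      intro x hx
      have hne : ∃ m ∈ children x n, m < n - N := by
        by_contra hcon
        push_neg at hcon
        have hfin : (children x n) ⊆ Set.Icc (n - N) n := by
          intro m hm
          refine ⟨hcon m hm, ?_⟩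
          have : m + (x m : ℤ) = n := hm
          omega
        exact hx ((Set.finite_Icc _ _).subset hfin)
      obtain ⟨m, hm, hmlt⟩ := hne
      have hxm : m + (x m : ℤ) = n := hm
      have hk : (x m : ℤ) = n - m := by omega
      have hkN : (N : ℤ) + 1 ≤ n - m := by omega
      refine Set.mem_iUnion.mpr ⟨x m - N - 1, ?_⟩
      show x (n - ((N + (x m - N - 1) + 1 : ℕ) : ℤ)) = N + (x m - N - 1) + 1
      have hxN : N + 1 ≤ x m := by omega
      have h1 : N + (x m - N - 1) + 1 = x m := by omega
      rw [h1]
      have h2 : n - ((x m : ℕ) : ℤ) = m := by omega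
      rw [h2]
    calc mu P a {x : XX | (children x n).Infinite}
        ≤ mu P a (⋃ i : ℕ, {x : XX | x (n - ((N + i + 1 : ℕ) : ℤ)) = N + i + 1}) :=
          measure_mono hsub
      _ ≤ ∑' i : ℕ, mu P a {x : XX | x (n - ((N + i + 1 : ℕ) : ℤ)) = N + i + 1} :=
          measure_iUnion_le _
      _ = ∑' i : ℕ, c (i + (N + 1)) := by
          refine tsum_congr fun i => ?_
          have he : N + i + 1 = i + (N + 1) := by omega
          rw [he, mu_single P a hmeas hindep hident, hc]
  have htail : Tendsto (fun N : ℕ => ∑' i : ℕ, c (i + (N + 1))) atTop (nhds 0) :=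
    (ENNReal.tendsto_sum_nat_add c hctot).comp (tendsto_add_atTop_nat 1)
  have := ge_of_tendsto' htail hbound
  simpa using this

lemma G0_compl_null : mu P a G0ᶜ = 0 := by
  have h : G0ᶜ = ⋃ n : ℤ, {x : XX | (children x n).Infinite} := by
    ext x
    simp only [G0, Set.mem_compl_iff, Set.mem_setOf_eq, Set.mem_iUnion, not_forall]
    exact Iff.rfl
  rw [h]
  exact measure_iUnion_null fun n => chInf_null P a hmeas hindep hident n

lemma sum_Fm (j : ℕ) : ∑' m : ℤ, mu P a (Fm j m) = mu P a S0 := by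
  have h1 : ∀ m : ℤ, mu P a (Fm j m) = mu P a (Em j m) := fun m => by
    rw [Fm_sh, mu_inv P a hmeas hindep hident m (meas_Em j m)]
  simp_rw [h1]
  rw [← measure_iUnion ?hd fun m => meas_Em j m]
  · congr 1
    ext x
    simp only [Set.mem_iUnion, Em, Set.mem_inter_iff, Set.mem_preimage, Set.mem_singleton_iff]
    constructor
    · rintro ⟨m, hm, -⟩; exact hm
    · intro hx; exact ⟨-((genMap bb x)^[j] 0), hx, by ring⟩
  case hd =>
    intro m m' hmm'
    rw [Function.onFun]
    apply Set.disjoint_left.mpr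
    rintro x ⟨-, h1⟩ ⟨-, h2⟩
    rw [Set.mem_preimage, Set.mem_singleton_iff] at h1 h2
    exact hmm' (by omega)

lemma U0_null (j : ℕ) :
    mu P a {x : XX | ∃ m m' : ℤ, m ≠ m' ∧ x ∈ Fm j m ∧ x ∈ Fm j m'} = 0 := by
  set μ := mu P a with hμ
  haveI : IsProbabilityMeasure μ := mu_prob P a hmeas
  set N : XX → ℝ≥0∞ := fun x => ∑' m : ℤ, (Fm j m).indicator 1 x with hN
  have hNmeas : Measurable N :=
    Measurable.ennreal_tsum fun m => measurable_const.indicator (meas_Fm j m)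
  have hImeas : Measurable (S0.indicator (1 : XX → ℝ≥0∞)) :=
    measurable_const.indicator meas_S0
  have hint : ∫⁻ x, N x ∂μ = μ S0 := by
    have h1 := lintegral_tsum (μ := μ) (f := fun (m : ℤ) (x : XX) => (Fm j m).indicator 1 x)
      (fun m => (measurable_const.indicator (meas_Fm j m)).aemeasurable)
    simp only [hN]
    rw [h1]
    have hone : ∀ m : ℤ, ∫⁻ x, (Fm j m).indicator (1 : XX → ℝ≥0∞) x ∂μ = μ (Fm j m) :=
      fun m => lintegral_indicator_one (meas_Fm j m)
    simp_rw [hone]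
    exact sum_Fm P a hmeas hindep hident j
  have hg : ∫⁻ x, S0.indicator (1 : XX → ℝ≥0∞) x ∂μ = μ S0 := lintegral_indicator_one meas_S0
  have hG0ae : ∀ᵐ x ∂μ, x ∈ G0 := by
    rw [ae_iff]
    exact G0_compl_null P a hmeas hindep hident
  have hle : S0.indicator (1 : XX → ℝ≥0∞) ≤ᵐ[μ] N := by
    refine hG0ae.mono fun x hx => ?_
    by_cases hxS : x ∈ S0
    · rw [Set.indicator_of_mem hxS]
      obtain ⟨m, hm, hsm⟩ := exists_succ_desc hx (hxS : succ x 0) j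
      have hmem : x ∈ Fm j m := ⟨hsm, by rwa [Set.mem_preimage, Set.mem_singleton_iff]⟩
      calc (1 : ℝ≥0∞) = (Fm j m).indicator 1 x := by rw [Set.indicator_of_mem hmem]; rfl
        _ ≤ N x := ENNReal.le_tsum m
    · rw [Set.indicator_of_notMem hxS]
      exact zero_le
  have hsub : ∫⁻ x, (N x - S0.indicator (1 : XX → ℝ≥0∞) x) ∂μ = 0 := by
    rw [lintegral_sub hImeas (by rw [hg]; exact measure_ne_top μ _) hle, hint, hg, tsub_self]
  have hae0 : ∀ᵐ x ∂μ, N x - S0.indicator (1 : XX → ℝ≥0∞) x = 0 := by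
    have := (lintegral_eq_zero_iff (hNmeas.sub hImeas)).mp hsub
    filter_upwards [this] with x hx using hx
  have hNle : ∀ᵐ x ∂μ, N x ≤ 1 := by
    refine hae0.mono fun x hx => ?_
    have h1 : N x ≤ S0.indicator (1 : XX → ℝ≥0∞) x := tsub_eq_zero_iff_le.mp hx
    refine le_trans h1 ?_
    by_cases hxS : x ∈ S0
    · rw [Set.indicator_of_mem hxS]; exact le_rfl
    · rw [Set.indicator_of_notMem hxS]; exact zero_le_one
  have hsubnull : {x : XX | ∃ m m' : ℤ, m ≠ m' ∧ x ∈ Fm j m ∧ x ∈ Fm j m'}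
      ⊆ {x : XX | ¬ N x ≤ 1} := by
    rintro x ⟨m, m', hmm', hm, hm'⟩
    simp only [Set.mem_setOf_eq, not_le]
    have h2 : (2 : ℝ≥0∞) ≤ N x := by
      have hsum : ∑ i ∈ ({m, m'} : Finset ℤ), (Fm j i).indicator (1 : XX → ℝ≥0∞) x ≤ N x :=
        ENNReal.sum_le_tsum _
      rw [Finset.sum_pair hmm', Set.indicator_of_mem hm, Set.indicator_of_mem hm'] at hsum
      calc (2 : ℝ≥0∞) = 1 + 1 := by norm_num
        _ ≤ N x := by simpa using hsum
    calc (1 : ℝ≥0∞) < 2 := by norm_num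
      _ ≤ N x := h2
  refine measure_mono_null hsubnull ?_
  exact ae_iff.mp hNle

end Meas

end DEC

namespace DEC

def Up (j : ℕ) (p : ℤ) : Set XX :=
  {x | ∃ m m' : ℤ, m ≠ m' ∧ (succ x m ∧ (genMap bb x)^[j] m = p)
    ∧ (succ x m' ∧ (genMap bb x)^[j] m' = p)}

lemma meas_Up (j : ℕ) (p : ℤ) : MeasurableSet (Up j p) := by
  have h : Up j p = ⋃ (m : ℤ) (m' : ℤ) (_ : m ≠ m'),
      (({x | succ x m} ∩ (fun x : XX => (genMap bb x)^[j] m) ⁻¹' {p})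
        ∩ ({x | succ x m'} ∩ (fun x : XX => (genMap bb x)^[j] m') ⁻¹' {p})) := by
    ext x
    simp only [Up, Set.mem_setOf_eq, Set.mem_iUnion, Set.mem_inter_iff, Set.mem_preimage,
      Set.mem_singleton_iff]
    constructor
    · rintro ⟨m, m', h1, h2, h3⟩; exact ⟨m, m', h1, ⟨h2.1, h2.2⟩, ⟨h3.1, h3.2⟩⟩
    · rintro ⟨m, m', h1, h2, h3⟩; exact ⟨m, m', h1, ⟨h2.1, h2.2⟩, ⟨h3.1, h3.2⟩⟩
  rw [h]
  exact MeasurableSet.iUnion fun m => MeasurableSet.iUnion fun m' =>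
    MeasurableSet.iUnion fun _ =>
      (((meas_succ m).inter (iter_meas j m (measurableSet_singleton p))).inter
        ((meas_succ m').inter (iter_meas j m' (measurableSet_singleton p))))

lemma Up_sh (j : ℕ) (p : ℤ) : Up j p = sh p ⁻¹' Up j 0 := by
  ext x
  simp only [Up, Set.mem_preimage, Set.mem_setOf_eq, succ_sh, iter_sh]
  constructor
  · rintro ⟨m, m', h1, ⟨h2, h3⟩, ⟨h4, h5⟩⟩
    exact ⟨m - p, m' - p, by omega, ⟨by rwa [sub_add_cancel], by rw [sub_add_cancel]; omega⟩,
      ⟨by rwa [sub_add_cancel], by rw [sub_add_cancel]; omega⟩⟩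
  · rintro ⟨m, m', h1, ⟨h2, h3⟩, ⟨h4, h5⟩⟩
    exact ⟨m + p, m' + p, by omega, ⟨h2, by omega⟩, ⟨h4, by omega⟩⟩

def Hk (j : ℕ) (k : ℤ) : Set XX :=
  Fm j k ∩ ⋂ (m : ℤ) (_ : m ≠ k), (Fm j m)ᶜ

lemma mem_Hk {j : ℕ} {k : ℤ} {x : XX} :
    x ∈ Hk j k ↔ (succ x k ∧ (genMap bb x)^[j] k = 0)
      ∧ ∀ m : ℤ, m ≠ k → ¬(succ x m ∧ (genMap bb x)^[j] m = 0) := by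
  simp only [Hk, Set.mem_inter_iff, Set.mem_iInter, Set.mem_compl_iff, mem_Fm]

lemma meas_Hk (j : ℕ) (k : ℤ) : MeasurableSet (Hk j k) :=
  (meas_Fm j k).inter (MeasurableSet.iInter fun m => MeasurableSet.iInter fun _ =>
    (meas_Fm j m).compl)

lemma Hk_subset_S0 {j : ℕ} {k : ℤ} : Hk j k ⊆ S0 :=
  fun _ hx => Fm_subset_S0 hx.1

lemma Hk_disjoint (j : ℕ) : Pairwise (Function.onFun Disjoint fun k => Hk j k) := by
  intro k k' hkk'
  rw [Function.onFun]
  apply Set.disjoint_left.mpr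
  intro x hx hx'
  rw [mem_Hk] at hx hx'
  exact hx.2 k' (fun h => hkk' h.symm) hx'.1

def Hk' (j : ℕ) (k : ℤ) : Set XX :=
  (S0 ∩ (fun x : XX => (genMap bb x)^[j] 0) ⁻¹' {-k}) ∩
    ⋂ (m : ℤ) (_ : m ≠ 0), ({x | succ x m} ∩ (fun x : XX => (genMap bb x)^[j] m) ⁻¹' {-k})ᶜ

lemma mem_Hk'_aux {j : ℕ} {k : ℤ} {x : XX} :
    x ∈ Hk' j k ↔ (succ x 0 ∧ (genMap bb x)^[j] 0 = -k)
      ∧ ∀ m : ℤ, m ≠ 0 → ¬(succ x m ∧ (genMap bb x)^[j] m = -k) := by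
  simp only [Hk', Set.mem_inter_iff, Set.mem_iInter, Set.mem_compl_iff, S0,
    Set.mem_preimage, Set.mem_singleton_iff, Set.mem_setOf_eq]

lemma meas_Hk' (j : ℕ) (k : ℤ) : MeasurableSet (Hk' j k) :=
  (meas_S0.inter (iter_meas j 0 (measurableSet_singleton _))).inter
    (MeasurableSet.iInter fun m => MeasurableSet.iInter fun _ =>
      ((meas_succ m).inter (iter_meas j m (measurableSet_singleton _))).compl)

lemma Hk'_subset_S0 {j : ℕ} {k : ℤ} : Hk' j k ⊆ S0 :=
  fun _ hx => hx.1.1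

lemma Hk'_disjoint (j : ℕ) : Pairwise (Function.onFun Disjoint fun k => Hk' j k) := by
  intro k k' hkk'
  rw [Function.onFun]
  apply Set.disjoint_left.mpr
  intro x hx hx'
  rw [mem_Hk'_aux] at hx hx'
  have h1 := hx.1.2
  have h2 := hx'.1.2
  exact hkk' (by omega)

end DEC

namespace DEC

lemma Hk_sh (j : ℕ) (k : ℤ) : Hk j k = sh k ⁻¹' Hk' j k := by
  ext x
  rw [mem_Hk, Set.mem_preimage, mem_Hk'_aux]
  simp only [succ_sh, iter_sh, zero_add]
  constructor
  · rintro ⟨⟨hs, hi⟩, hcl⟩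
    refine ⟨⟨hs, by omega⟩, ?_⟩
    rintro m hm ⟨hsm, him⟩
    exact hcl (m + k) (by omega) ⟨hsm, by omega⟩
  · rintro ⟨⟨hs, hi⟩, hcl⟩
    refine ⟨⟨hs, by omega⟩, ?_⟩
    rintro m hm ⟨hsm, him⟩
    exact hcl (m - k) (by omega) ⟨by rwa [sub_add_cancel], by rw [sub_add_cancel]; omega⟩

lemma cover_Hk {j : ℕ} {x : XX} (hx : x ∈ S0) (hG : x ∈ G0) (hU : x ∉ Up j 0) :
    ∃ k, x ∈ Hk j k := by
  obtain ⟨m, hm, hsm⟩ := exists_succ_desc hG (hx : succ x 0) j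
  refine ⟨m, mem_Hk.mpr ⟨⟨hsm, hm⟩, ?_⟩⟩
  rintro m' hm' ⟨hsm', him'⟩
  exact hU ⟨m', m, hm', ⟨hsm', him'⟩, ⟨hsm, hm⟩⟩

lemma cover_Hk' {j : ℕ} {x : XX} (hx : x ∈ S0) (hU : ∀ p, x ∉ Up j p) :
    ∃ k, x ∈ Hk' j k := by
  refine ⟨-((genMap bb x)^[j] 0), mem_Hk'_aux.mpr ⟨⟨hx, by ring⟩, ?_⟩⟩
  rintro m hm ⟨hsm, him⟩
  exact hU ((genMap bb x)^[j] 0) ⟨m, 0, hm, ⟨hsm, by omega⟩, ⟨hx, rfl⟩⟩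

lemma key_count {j : ℕ} (hj : 1 ≤ j) {k : ℤ} {x : XX} (hx : x ∈ Hk j k) (hG : x ∈ G0) :
    cousinsDegree bb (sh k x) j = directEphemeralDegree bb x j := by
  obtain ⟨j', rfl⟩ : ∃ j', j = j' + 1 := ⟨j - 1, by omega⟩
  rw [mem_Hk] at hx
  obtain ⟨⟨hsk, hik⟩, huni⟩ := hx
  have hstep : {m : ℤ | (genMap bb x)^[j'+1] m = 0 ∧ (genMap bb x)^[j'] m ≠ (genMap bb x)^[j'] k}
      = {m : ℤ | (genMap bb x)^[j'+1] m = 0 ∧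
          ∀ i : ℕ, i < j' + 1 → Ephemeral bb x ((genMap bb x)^[i] m)} := by
    ext m
    simp only [Set.mem_setOf_eq]
    constructor
    · rintro ⟨h0, hne⟩
      refine ⟨h0, ?_⟩
      have heph : Ephemeral bb x ((genMap bb x)^[j'] m) := by
        by_contra hc
        have hsucc : succ x ((genMap bb x)^[j'] m) := hc
        obtain ⟨w, hw, hsw⟩ := exists_succ_desc hG hsucc j'
        have hwj : (genMap bb x)^[j'+1] w = 0 := by
          have e1 : (genMap bb x)^[j'+1] w = genMap bb x ((genMap bb x)^[j'] w) :=
            Function.iterate_succ_apply' _ _ _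
          have e2 : (genMap bb x)^[j'+1] m = genMap bb x ((genMap bb x)^[j'] m) :=
            Function.iterate_succ_apply' _ _ _
          rw [e1, hw, ← e2, h0]
        have hwk : w = k := by
          by_contra hne'
          exact huni w hne' ⟨hsw, hwj⟩
        exact hne (by rw [← hw, hwk])
      intro i hi
      have h1 : (genMap bb x)^[j' - i] ((genMap bb x)^[i] m) = (genMap bb x)^[j'] m := by
        rw [← Function.iterate_add_apply]
        congr 1
        omega
      refine heph.subset ?_
      rw [← h1]
      exact desc_mono x _ _
    · rintro ⟨h0, heph⟩
      refine ⟨h0, ?_⟩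
      intro heq
      have h1 := heph j' (by omega)
      rw [heq] at h1
      exact succ_iter hsk j' h1
  have himg : {m : ℤ | (genMap bb (sh k x))^[j'+1] m = (genMap bb (sh k x))^[j'+1] 0 ∧
      (genMap bb (sh k x))^[j'+1-1] m ≠ (genMap bb (sh k x))^[j'+1-1] 0}
      = (fun u : ℤ => u - k) '' {m : ℤ | (genMap bb x)^[j'+1] m = 0 ∧
          (genMap bb x)^[j'] m ≠ (genMap bb x)^[j'] k} := by
    ext m
    simp only [Set.mem_setOf_eq, Set.mem_image, Nat.add_sub_cancel, iter_sh, zero_add]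
    constructor
    · rintro ⟨h1, h2⟩
      exact ⟨m + k, ⟨by omega, fun hc => h2 (by omega)⟩, by ring⟩
    · rintro ⟨u, ⟨h1, h2⟩, rfl⟩
      have e : u - k + k = u := by ring
      rw [e]
      exact ⟨by omega, fun hc => h2 (by omega)⟩
  have hinj : Function.Injective (fun u : ℤ => u - k) := fun u v h => by
    dsimp at h; omega
  unfold cousinsDegree directEphemeralDegree
  rw [himg, Set.ncard_image_of_injective _ hinj, hstep]

end DEC

namespace DEC

def Gd (j : ℕ) : Set XX := G0 ∩ ⋂ p : ℤ, (Up j p)ᶜ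

lemma meas_Gd (j : ℕ) : MeasurableSet (Gd j) :=
  meas_G0.inter (MeasurableSet.iInter fun p => (meas_Up j p).compl)

section Meas

variable {Ω : Type*} [MeasurableSpace Ω] (P : Measure Ω) [IsProbabilityMeasure P]
  (a : ℤ → Ω → ℕ)
  (hmeas : ∀ n, Measurable (a n))
  (hindep : iIndepFun a P)
  (hident : ∀ n, Measure.map (a n) P = Measure.map (a 0) P)

include hmeas hindep hident

lemma Up_null (j : ℕ) (p : ℤ) : mu P a (Up j p) = 0 := by
  have h0 : mu P a (Up j 0) = 0 := by
    have h := U0_null P a hmeas hindep hident j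
    have heq : {x : XX | ∃ m m' : ℤ, m ≠ m' ∧ x ∈ Fm j m ∧ x ∈ Fm j m'} = Up j 0 := by
      ext x
      simp only [Up, Set.mem_setOf_eq, mem_Fm]
    rwa [heq] at h
  rw [Up_sh, mu_inv P a hmeas hindep hident p (meas_Up j 0)]
  exact h0

lemma Gd_compl_null (j : ℕ) : mu P a (Gd j)ᶜ = 0 := by
  have h : (Gd j)ᶜ = G0ᶜ ∪ ⋃ p : ℤ, Up j p := by
    rw [Gd, Set.compl_inter, Set.compl_iInter]
    simp only [compl_compl]
  rw [h]
  exact measure_union_null (G0_compl_null P a hmeas hindep hident)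
    (measure_iUnion_null fun p => Up_null P a hmeas hindep hident j p)

lemma key_measure (j q : ℕ) (hj : 1 ≤ j) :
    mu P a (S0 ∩ {x : XX | directEphemeralDegree bb x j = q})
      = mu P a (S0 ∩ {x : XX | cousinsDegree bb x j = q}) := by
  set Dq := {x : XX | directEphemeralDegree bb x j = q} with hDq
  set Aq := {x : XX | cousinsDegree bb x j = q} with hAq
  have hmDq : MeasurableSet Dq := meas_dE j q
  have hmAq : MeasurableSet Aq := meas_cous j q
  have hGnull : mu P a (Gd j)ᶜ = 0 := Gd_compl_null P a hmeas hindep hident j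
  have e1 : mu P a (S0 ∩ Dq) = mu P a ((S0 ∩ Dq) ∩ Gd j) :=
    (measure_inter_conull hGnull).symm
  have hset1 : (S0 ∩ Dq) ∩ Gd j = ⋃ k : ℤ, (Hk j k ∩ Dq ∩ Gd j) := by
    ext x
    simp only [Set.mem_inter_iff, Set.mem_iUnion]
    constructor
    · rintro ⟨⟨hx, hd⟩, hg⟩
      obtain ⟨k, hk⟩ := cover_Hk hx hg.1 (Set.mem_iInter.mp hg.2 0)
      exact ⟨k, ⟨hk, hd⟩, hg⟩
    · rintro ⟨k, ⟨hk, hd⟩, hg⟩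
      exact ⟨⟨Hk_subset_S0 hk, hd⟩, hg⟩
  have e2 : mu P a (⋃ k : ℤ, (Hk j k ∩ Dq ∩ Gd j)) = ∑' k : ℤ, mu P a (Hk j k ∩ Dq ∩ Gd j) :=
    measure_iUnion
      (fun k k' hkk' => Disjoint.mono
        (Set.inter_subset_left.trans Set.inter_subset_left)
        (Set.inter_subset_left.trans Set.inter_subset_left)
        (Hk_disjoint j hkk'))
      (fun k => ((meas_Hk j k).inter hmDq).inter (meas_Gd j))
  have e3 : ∀ k : ℤ, Hk j k ∩ Dq ∩ Gd j = Hk j k ∩ sh k ⁻¹' Aq ∩ Gd j := by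
    intro k
    ext x
    simp only [Set.mem_inter_iff, Set.mem_preimage, hDq, hAq, Set.mem_setOf_eq]
    constructor
    · rintro ⟨⟨hk, hd⟩, hg⟩
      exact ⟨⟨hk, by rw [key_count hj hk hg.1]; exact hd⟩, hg⟩
    · rintro ⟨⟨hk, hc⟩, hg⟩
      exact ⟨⟨hk, by rw [← key_count hj hk hg.1]; exact hc⟩, hg⟩
  have e4 : ∀ k : ℤ, mu P a (Hk j k ∩ sh k ⁻¹' Aq ∩ Gd j) = mu P a (Hk' j k ∩ Aq) := by
    intro k
    rw [measure_inter_conull hGnull, Hk_sh, ← Set.preimage_inter,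
      mu_inv P a hmeas hindep hident k ((meas_Hk' j k).inter hmAq)]
  have e5 : ∑' k : ℤ, mu P a (Hk' j k ∩ Aq) = mu P a (⋃ k : ℤ, (Hk' j k ∩ Aq)) :=
    (measure_iUnion
      (fun k k' hkk' => Disjoint.mono Set.inter_subset_left Set.inter_subset_left
        (Hk'_disjoint j hkk'))
      (fun k => (meas_Hk' j k).inter hmAq)).symm
  have e6 : mu P a (⋃ k : ℤ, (Hk' j k ∩ Aq)) = mu P a (S0 ∩ Aq) := by
    apply le_antisymm
    · apply measure_mono
      exact Set.iUnion_subset fun k x hx => ⟨Hk'_subset_S0 hx.1, hx.2⟩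
    · calc mu P a (S0 ∩ Aq) = mu P a ((S0 ∩ Aq) ∩ Gd j) := (measure_inter_conull hGnull).symm
        _ ≤ mu P a (⋃ k : ℤ, (Hk' j k ∩ Aq)) := by
          apply measure_mono
          rintro x ⟨⟨hx, ha⟩, hg⟩
          obtain ⟨k, hk⟩ := cover_Hk' hx (fun p => Set.mem_iInter.mp hg.2 p)
          exact Set.mem_iUnion.mpr ⟨k, hk, ha⟩
  calc mu P a (S0 ∩ Dq) = mu P a ((S0 ∩ Dq) ∩ Gd j) := e1
    _ = mu P a (⋃ k : ℤ, (Hk j k ∩ Dq ∩ Gd j)) := by rw [hset1]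
    _ = ∑' k : ℤ, mu P a (Hk j k ∩ Dq ∩ Gd j) := e2
    _ = ∑' k : ℤ, mu P a (Hk' j k ∩ Aq) := tsum_congr fun k => by rw [e3 k]; exact e4 k
    _ = mu P a (⋃ k : ℤ, (Hk' j k ∩ Aq)) := e5
    _ = mu P a (S0 ∩ Aq) := e6

end Meas

end DEC


/-- For every `j ≥ 1` and every `q ≥ 0`,
`ℙ[d^e_j(0) = q | 0 successful] = ℙ[l_j(0) = q | 0 successful]`. -/
theorem direct_ephemeral_eq_cousins_in_distribution
    {Ω : Type*} [MeasurableSpace Ω] (P : Measure Ω) [IsProbabilityMeasure P]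
    (a : ℤ → Ω → ℕ) (hmeas : ∀ n, Measurable (a n)) (hpos : ∀ n ω, 1 ≤ a n ω)
    (hindep : iIndepFun a P)
    (hident : ∀ n, Measure.map (a n) P = Measure.map (a 0) P)
    (hmean : ∫⁻ ω, (a 0 ω : ℝ≥0∞) ∂P < ⊤)
    (h1 : 0 < P {ω | a 0 ω = 1}) :
    ∀ j q : ℕ, 1 ≤ j →
      P[|{ω | (descendants a ω 0).Infinite}] {ω | directEphemeralDegree a ω j = q}
        = P[|{ω | (descendants a ω 0).Infinite}] {ω | cousinsDegree a ω j = q} := by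
  intro j q hj
  have hSeq : {ω : Ω | (descendants a ω 0).Infinite} = DEC.AA a ⁻¹' DEC.S0 := rfl
  have hDeq : {ω : Ω | directEphemeralDegree a ω j = q}
      = DEC.AA a ⁻¹' {x : DEC.XX | directEphemeralDegree DEC.bb x j = q} := rfl
  have hCeq : {ω : Ω | cousinsDegree a ω j = q}
      = DEC.AA a ⁻¹' {x : DEC.XX | cousinsDegree DEC.bb x j = q} := rfl
  have hmS : MeasurableSet {ω : Ω | (descendants a ω 0).Infinite} := by
    rw [hSeq]
    exact DEC.meas_AA a hmeas DEC.meas_S0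
  rw [cond_apply hmS, cond_apply hmS]
  congr 1
  rw [hSeq, hDeq, hCeq, ← Set.preimage_inter, ← Set.preimage_inter]
  rw [← Measure.map_apply (DEC.meas_AA a hmeas) (DEC.meas_S0.inter (DEC.meas_dE j q)),
    ← Measure.map_apply (DEC.meas_AA a hmeas) (DEC.meas_S0.inter (DEC.meas_cous j q))]
  exact DEC.key_measure P a hmeas hindep hident j q hj
end

section
/- Almost surely, the set S of successful integers is unbounded above and unbounded below in ℤ, is stable under f (if n ∈ S then f(n) ∈ S), and is totally ordered by ancestry: for any two successful integers k < k′ there exists j ≥ 0 with f^j(k) = k′. (Thus the successful integers form the unique bi-infinite path of the tree T^f.) -/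
open MeasureTheory ProbabilityTheory Filter
open scoped ENNReal

/-- The set of successful integers: those with infinitely many descendants. -/
def successfulSet {Ω : Type*} (a : ℤ → Ω → ℕ) (ω : Ω) : Set ℤ :=
  {n : ℤ | Set.Infinite {m : ℤ | ∃ j : ℕ, (genMap a ω)^[j] m = n}}

section Det
variable {Ω : Type*} (a : ℤ → Ω → ℕ) (ω : Ω)

lemma SIP_iter_ge (hpos : ∀ n, 1 ≤ a n ω) (m : ℤ) (j : ℕ) :
    m + j ≤ (genMap a ω)^[j] m := by
  induction j with
  | zero => simp
  | succ j ih =>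
    rw [Function.iterate_succ_apply']
    have h1 : (1 : ℤ) ≤ (a ((genMap a ω)^[j] m) ω : ℤ) := by exact_mod_cast hpos _
    show m + (j + 1 : ℕ) ≤ (genMap a ω)^[j] m + (a ((genMap a ω)^[j] m) ω : ℤ)
    push_cast
    omega

lemma SIP_reach {M : ℤ} (hB : ∀ q : ℤ, q < M - 1 → q + (a q ω : ℤ) < M)
    (hpos : ∀ n, 1 ≤ a n ω) :
    ∀ m : ℤ, m ≤ M - 1 → ∃ j : ℕ, (genMap a ω)^[j] m = M - 1 := by
  have key : ∀ k : ℕ, ∀ m : ℤ, m ≤ M - 1 → (M - 1 - m).toNat ≤ k →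
      ∃ j : ℕ, (genMap a ω)^[j] m = M - 1 := by
    intro k
    induction k with
    | zero =>
      intro m hm hk
      refine ⟨0, ?_⟩
      simp only [Function.iterate_zero, id]
      omega
    | succ k ih =>
      intro m hm hk
      rcases eq_or_lt_of_le hm with heq | hlt
      · exact ⟨0, heq⟩
      · have h1 : (1 : ℤ) ≤ (a m ω : ℤ) := by exact_mod_cast hpos m
        have hlt2 : m + (a m ω : ℤ) < M := hB m hlt
        obtain ⟨j, hj⟩ := ih (m + (a m ω : ℤ)) (by omega) (by omega)
        exact ⟨j + 1, by rw [Function.iterate_succ_apply]; exact hj⟩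
  intro m hm
  exact key (M - 1 - m).toNat m hm le_rfl

lemma SIP_succ_mem {M : ℤ} (hB : ∀ q : ℤ, q < M - 1 → q + (a q ω : ℤ) < M)
    (hpos : ∀ n, 1 ≤ a n ω) : (M - 1) ∈ successfulSet a ω := by
  refine Set.Infinite.mono ?_ (Set.Iic_infinite (M - 1))
  intro m hm
  exact SIP_reach a ω hB hpos m hm

lemma SIP_stable {n : ℤ} (hn : n ∈ successfulSet a ω) :
    genMap a ω n ∈ successfulSet a ω := by
  refine Set.Infinite.mono ?_ hn
  rintro m ⟨j, hj⟩
  exact ⟨j + 1, by rw [Function.iterate_succ_apply']; rw [hj]⟩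

lemma SIP_small_desc (hpos : ∀ n, 1 ≤ a n ω) {n : ℤ} (hn : n ∈ successfulSet a ω)
    (M : ℤ) : ∃ m : ℤ, m < M ∧ ∃ j : ℕ, (genMap a ω)^[j] m = n := by
  by_contra h
  push_neg at h
  apply hn
  apply Set.Finite.subset (Set.finite_Icc M n)
  rintro m ⟨j, hj⟩
  have hge := SIP_iter_ge a ω hpos m j
  have hM : ¬ m < M := fun hlt => (h m hlt j) hj
  constructor <;> omega

lemma SIP_compare (hpos : ∀ n, 1 ≤ a n ω) {m x y : ℤ} {i j : ℕ}
    (hx : (genMap a ω)^[i] m = x) (hy : (genMap a ω)^[j] m = y) (hxy : x < y) :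
    ∃ u : ℕ, (genMap a ω)^[u] x = y := by
  have hij : i ≤ j := by
    by_contra hc
    push_neg at hc
    have h2 : y + ((i - j : ℕ) : ℤ) ≤ (genMap a ω)^[i - j] y := SIP_iter_ge a ω hpos y (i - j)
    rw [← hy, ← Function.iterate_add_apply, Nat.sub_add_cancel hc.le, hx] at h2
    have : (1:ℤ) ≤ ((i - j : ℕ) : ℤ) := by exact_mod_cast Nat.one_le_iff_ne_zero.mpr (Nat.sub_ne_zero_of_lt hc)
    omega
  refine ⟨j - i, ?_⟩
  rw [← hx, ← Function.iterate_add_apply, Nat.sub_add_cancel hij, hy]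

end Det

section Wrap
variable {Ω : Type*} (a : ℤ → Ω → ℕ) (ω : Ω)

lemma SIP_iter_mem (hn : ∀ n ∈ successfulSet a ω, genMap a ω n ∈ successfulSet a ω)
    {n : ℤ} (h : n ∈ successfulSet a ω) (j : ℕ) : (genMap a ω)^[j] n ∈ successfulSet a ω := by
  induction j with
  | zero => exact h
  | succ j ih => rw [Function.iterate_succ_apply']; exact hn _ ih

lemma SIP_main (hpos : ∀ n, 1 ≤ a n ω)
    (hG : ∀ M₀ : ℤ, ∃ M : ℤ, M < M₀ ∧ ∀ q : ℤ, q < M - 1 → q + (a q ω : ℤ) < M) :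
    (∀ M : ℤ, ∃ k ∈ successfulSet a ω, M < k) ∧
    (∀ M : ℤ, ∃ k ∈ successfulSet a ω, k < M) ∧
    (∀ n ∈ successfulSet a ω, genMap a ω n ∈ successfulSet a ω) ∧
    (∀ k ∈ successfulSet a ω, ∀ k' ∈ successfulSet a ω, k < k' →
      ∃ j : ℕ, (genMap a ω)^[j] k = k') := by
  have hstable : ∀ n ∈ successfulSet a ω, genMap a ω n ∈ successfulSet a ω :=
    fun n hn => SIP_stable a ω hn
  have hbelow : ∀ M : ℤ, ∃ k ∈ successfulSet a ω, k < M := by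
    intro M₀
    obtain ⟨M, hM, hB⟩ := hG M₀
    exact ⟨M - 1, SIP_succ_mem a ω hB hpos, by omega⟩
  refine ⟨?_, hbelow, hstable, ?_⟩
  · intro M
    obtain ⟨n₀, hn₀, _⟩ := hbelow 0
    refine ⟨(genMap a ω)^[(M + 1 - n₀).toNat] n₀, SIP_iter_mem a ω hstable hn₀ _, ?_⟩
    have := SIP_iter_ge a ω hpos n₀ (M + 1 - n₀).toNat
    omega
  · intro k hk k' hk' hkk'
    obtain ⟨M, hM, hB⟩ := hG k
    obtain ⟨m, hm, i, hi⟩ := SIP_small_desc a ω hpos hk M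
    obtain ⟨m', hm', i', hi'⟩ := SIP_small_desc a ω hpos hk' M
    obtain ⟨u, hu⟩ := SIP_reach a ω hB hpos m (by omega)
    obtain ⟨u', hu'⟩ := SIP_reach a ω hB hpos m' (by omega)
    obtain ⟨v, hv⟩ := SIP_compare a ω hpos hu hi (by omega)
    obtain ⟨v', hv'⟩ := SIP_compare a ω hpos hu' hi' (by omega)
    exact SIP_compare a ω hpos hv hv' hkk'
end Wrap


section ProbPart
variable {Ω : Type*}

def sipE (a : ℤ → Ω → ℕ) (M : ℤ) (i : ℕ) : Set Ω := {ω | a (M - 2 - (i : ℤ)) ω ≤ i + 1}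

def sipB (a : ℤ → Ω → ℕ) (M : ℤ) : Set Ω := ⋂ i : ℕ, sipE a M i

def sipU (a : ℤ → Ω → ℕ) (M₀ : ℤ) : Set Ω := ⋃ M : ℤ, ⋃ _ : M < M₀, sipB a M

def sipG (a : ℤ → Ω → ℕ) : Set Ω := ⋂ M₀ : ℤ, sipU a M₀

lemma sipE_eq (a : ℤ → Ω → ℕ) (M : ℤ) (i : ℕ) :
    sipE a M i = a (M - 2 - (i : ℤ)) ⁻¹' {k | k ≤ i + 1} := rfl

lemma sipE_meas [MeasurableSpace Ω] {a : ℤ → Ω → ℕ} (hmeas : ∀ n, Measurable (a n))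
    (M : ℤ) (i : ℕ) : MeasurableSet (sipE a M i) := by
  rw [sipE_eq]
  exact (hmeas _) trivial

lemma sipB_prop {a : ℤ → Ω → ℕ} {M : ℤ} {ω : Ω} (h : ω ∈ sipB a M) :
    ∀ q : ℤ, q < M - 1 → q + (a q ω : ℤ) < M := by
  intro q hq
  have hmem := Set.mem_iInter.mp h (M - 2 - q).toNat
  have hq2 : (((M - 2 - q).toNat : ℤ)) = M - 2 - q := Int.toNat_of_nonneg (by omega)
  rw [sipE, Set.mem_setOf_eq] at hmem
  have : a (M - 2 - ((M - 2 - q).toNat : ℤ)) ω ≤ (M - 2 - q).toNat + 1 := hmem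
  rw [hq2] at this
  have h3 : (a (M - 2 - (M - 2 - q)) ω : ℤ) ≤ ((M - 2 - q).toNat : ℤ) + 1 := by exact_mod_cast this
  have h4 : M - 2 - (M - 2 - q) = q := by ring
  rw [h4] at h3
  omega

lemma sipU_mono {a : ℤ → Ω → ℕ} {M₀ M₀' : ℤ} (h : M₀ ≤ M₀') : sipU a M₀ ⊆ sipU a M₀' := by
  intro ω hω
  obtain ⟨M, hM, hB⟩ := by simpa [sipU] using hω
  exact Set.mem_iUnion.mpr ⟨M, Set.mem_iUnion.mpr ⟨by omega, hB⟩⟩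

lemma sipG_eq (a : ℤ → Ω → ℕ) (N : ℤ) : sipG a = ⋂ k : ℕ, sipU a (N - k) := by
  apply Set.Subset.antisymm
  · exact Set.subset_iInter fun k => Set.iInter_subset _ _
  · intro ω hω
    refine Set.mem_iInter.mpr fun M₀ => ?_
    have hk := Set.mem_iInter.mp hω (N - M₀).toNat
    refine sipU_mono ?_ hk
    have := Int.self_le_toNat (N - M₀)
    omega

lemma sipG_prop {a : ℤ → Ω → ℕ} {ω : Ω} (h : ω ∈ sipG a) :
    ∀ M₀ : ℤ, ∃ M : ℤ, M < M₀ ∧ ∀ q : ℤ, q < M - 1 → q + (a q ω : ℤ) < M := by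
  intro M₀
  have := Set.mem_iInter.mp h M₀
  obtain ⟨M, hM, hB⟩ := by simpa [sipU] using this
  exact ⟨M, hM, sipB_prop hB⟩

variable [MeasurableSpace Ω] (P : Measure Ω) [IsProbabilityMeasure P]
  (a : ℤ → Ω → ℕ)

lemma SIP_layercake (hmeas : ∀ n, Measurable (a n))
    (hmean : ∫⁻ ω, (a 0 ω : ℝ≥0∞) ∂P < ⊤) :
    ∑' j : ℕ, P {ω | j < a 0 ω} ≠ ⊤ := by
  have hms : ∀ j : ℕ, MeasurableSet {ω | j < a 0 ω} := fun j =>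
    (hmeas 0) (trivial : MeasurableSet {k : ℕ | j < k})
  have hpt : ∀ ω, (∑' j : ℕ, Set.indicator {ω' | j < a 0 ω'} (1 : Ω → ℝ≥0∞) ω)
      = (a 0 ω : ℝ≥0∞) := by
    intro ω
    have h0 : ∀ j ∉ Finset.range (a 0 ω),
        Set.indicator {ω' | j < a 0 ω'} (1 : Ω → ℝ≥0∞) ω = 0 := by
      intro j hj
      apply Set.indicator_of_notMem
      simp only [Finset.mem_range, not_lt] at hj
      simp only [Set.mem_setOf_eq, not_lt]
      omega
    rw [tsum_eq_sum h0]
    have h1 : ∀ j ∈ Finset.range (a 0 ω),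
        Set.indicator {ω' | j < a 0 ω'} (1 : Ω → ℝ≥0∞) ω = 1 := by
      intro j hj
      exact Set.indicator_of_mem (by simpa using Finset.mem_range.mp hj) _
    rw [Finset.sum_congr rfl h1]
    simp
  have hcalc : (∑' j : ℕ, P {ω | j < a 0 ω}) = ∫⁻ ω, (a 0 ω : ℝ≥0∞) ∂P := by
    calc ∑' j : ℕ, P {ω | j < a 0 ω}
        = ∑' j : ℕ, ∫⁻ ω, Set.indicator {ω' | j < a 0 ω'} (1 : Ω → ℝ≥0∞) ω ∂P := by
          exact tsum_congr fun j => (lintegral_indicator_one (hms j)).symm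
      _ = ∫⁻ ω, ∑' j : ℕ, Set.indicator {ω' | j < a 0 ω'} (1 : Ω → ℝ≥0∞) ω ∂P :=
          (lintegral_tsum fun j => (measurable_one.indicator (hms j)).aemeasurable).symm
      _ = ∫⁻ ω, (a 0 ω : ℝ≥0∞) ∂P := lintegral_congr hpt
  rw [hcalc]
  exact hmean.ne


lemma SIP_transfer (hmeas : ∀ n, Measurable (a n))
    (hident : ∀ n, Measure.map (a n) P = Measure.map (a 0) P)
    (m : ℤ) (t : Set ℕ) : P (a m ⁻¹' t) = P (a 0 ⁻¹' t) := by
  rw [← Measure.map_apply (hmeas m) trivial, hident m, Measure.map_apply (hmeas 0) trivial]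

lemma SIP_prod (hmeas : ∀ n, Measurable (a n))
    (hindep : iIndepFun a P)
    (hident : ∀ n, Measure.map (a n) P = Measure.map (a 0) P)
    (M : ℤ) (S : Finset ℕ) :
    P (⋂ i ∈ S, sipE a M i) = ∏ i ∈ S, P {ω | a 0 ω ≤ i + 1} := by
  classical
  set e : ℕ → ℤ := fun i => M - 2 - (i : ℤ) with he
  set g : ℤ → Set Ω := fun m => a m ⁻¹' {k | k ≤ (M - 2 - m).toNat + 1} with hg
  have hge : ∀ i : ℕ, g (e i) = sipE a M i := by
    intro i
    have h4 : M - 2 - (M - 2 - (i : ℤ)) = (i : ℤ) := by ring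
    simp only [hg, he, h4, Int.toNat_natCast]
    rfl
  have him : (⋂ i ∈ S, sipE a M i) = ⋂ m ∈ S.image e, g m := by
    rw [Finset.set_biInter_finset_image]
    exact Set.iInter₂_congr fun i _ => (hge i).symm
  rw [him]
  rw [hindep.meas_biInter (fun m _ => ⟨{k | k ≤ (M - 2 - m).toNat + 1}, trivial, rfl⟩)]
  rw [Finset.prod_image (fun i _ j _ h => by simp only [he] at h; omega)]
  refine Finset.prod_congr rfl fun i _ => ?_
  show P (g (e i)) = _
  rw [hge i, sipE_eq, SIP_transfer P a hmeas hident]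
  rfl


lemma SIP_B_lower (hmeas : ∀ n, Measurable (a n))
    (hindep : iIndepFun a P)
    (hident : ∀ n, Measure.map (a n) P = Measure.map (a 0) P)
    (hmean : ∫⁻ ω, (a 0 ω : ℝ≥0∞) ∂P < ⊤)
    (h1 : 0 < P {ω | a 0 ω = 1}) :
    ∃ δ : ℝ≥0∞, δ ≠ 0 ∧ ∀ M : ℤ, δ ≤ P (sipB a M) := by
  classical
  set c : ℕ → ℝ≥0∞ := fun i => P {ω | a 0 ω ≤ i + 1} with hc
  set r : ℕ → ℝ≥0∞ := fun i => P {ω | i + 1 < a 0 ω} with hr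
  have hEc : ∀ (M : ℤ) (i : ℕ), P ((sipE a M i)ᶜ) = r i := by
    intro M i
    have h2 : (sipE a M i)ᶜ = a (M - 2 - (i : ℤ)) ⁻¹' {k | i + 1 < k} := by
      ext ω; simp [sipE, not_le]
    rw [h2, SIP_transfer P a hmeas hident]
    rfl
  have hrsum : ∑' i, r i ≠ ⊤ := by
    refine ne_top_of_le_ne_top (SIP_layercake P a hmeas hmean) (ENNReal.tsum_le_tsum fun i => ?_)
    exact measure_mono fun ω hω => by simp only [Set.mem_setOf_eq] at *; omega
  have htendsto := ENNReal.tendsto_sum_nat_add r hrsum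
  have hhalfpos : (0 : ℝ≥0∞) < 1 / 2 := by norm_num
  obtain ⟨N₁, hN₁⟩ := (htendsto.eventually_lt_const hhalfpos).exists
  set C₁ : ℝ≥0∞ := ∏ i ∈ Finset.range N₁, c i with hC₁
  have hC₁pos : 0 < C₁ := by
    refine CanonicallyOrderedAdd.prod_pos.mpr fun i _ => ?_
    refine lt_of_lt_of_le h1 (measure_mono fun ω hω => ?_)
    simp only [Set.mem_setOf_eq] at *
    omega
  have hC₁le1 : C₁ ≤ 1 := Finset.prod_le_one (fun _ _ => zero_le) (fun i _ => prob_le_one)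
  have hC₁top : C₁ ≠ ⊤ := (lt_of_le_of_lt hC₁le1 ENNReal.one_lt_top).ne
  set δ : ℝ≥0∞ := C₁ / 2 / 2 with hδ
  have hδpos : 0 < δ :=
    ENNReal.div_pos (ENNReal.div_pos hC₁pos.ne' ENNReal.ofNat_ne_top).ne' ENNReal.ofNat_ne_top
  have hδtop : δ ≠ ⊤ := by
    simp only [hδ, ENNReal.div_eq_inv_mul]
    exact ENNReal.mul_ne_top (ENNReal.inv_ne_top.mpr two_ne_zero)
      (ENNReal.mul_ne_top (ENNReal.inv_ne_top.mpr two_ne_zero) hC₁top)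
  obtain ⟨N₂, hN₂δ, hN₂ge⟩ := ((htendsto.eventually_lt_const hδpos).and
    (eventually_ge_atTop N₁)).exists
  refine ⟨δ, hδpos.ne', fun M => ?_⟩
  -- tail sum bounds
  have htail1 : ∑ i ∈ Finset.Ico N₁ N₂, r i ≤ 1 / 2 := by
    rw [Finset.sum_Ico_eq_sum_range]
    calc ∑ k ∈ Finset.range (N₂ - N₁), r (N₁ + k)
        = ∑ k ∈ Finset.range (N₂ - N₁), r (k + N₁) := by
          exact Finset.sum_congr rfl fun k _ => by rw [add_comm]
      _ ≤ ∑' k, r (k + N₁) := ENNReal.sum_le_tsum _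
      _ ≤ 1 / 2 := hN₁.le
  -- head bound
  have hQ : 1 / 2 ≤ ∏ i ∈ Finset.Ico N₁ N₂, c i := by
    have hQP : (∏ i ∈ Finset.Ico N₁ N₂, c i) = P (⋂ i ∈ Finset.Ico N₁ N₂, sipE a M i) :=
      (SIP_prod P a hmeas hindep hident M _).symm
    have hcompl : (⋂ i ∈ Finset.Ico N₁ N₂, sipE a M i)
        = (⋃ i ∈ Finset.Ico N₁ N₂, (sipE a M i)ᶜ)ᶜ := by
      simp [Set.compl_iUnion]
    have hUmeas : MeasurableSet (⋃ i ∈ Finset.Ico N₁ N₂, (sipE a M i)ᶜ) :=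
      MeasurableSet.biUnion (Finset.countable_toSet _)
        (fun i _ => (sipE_meas hmeas M i).compl)
    have hUb : P (⋃ i ∈ Finset.Ico N₁ N₂, (sipE a M i)ᶜ) ≤ 1 / 2 := by
      refine le_trans (measure_biUnion_finset_le _ _) ?_
      refine le_trans (le_of_eq (Finset.sum_congr rfl fun i _ => hEc M i)) htail1
    rw [hQP, hcompl, prob_compl_eq_one_sub hUmeas]
    calc (1 : ℝ≥0∞) / 2 = 1 - 1 / 2 := by rw [ENNReal.sub_half ENNReal.one_ne_top]
      _ ≤ 1 - P (⋃ i ∈ Finset.Ico N₁ N₂, (sipE a M i)ᶜ) := tsub_le_tsub_left hUb 1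
  have hhead : δ + δ ≤ P (⋂ i ∈ Finset.range N₂, sipE a M i) := by
    rw [SIP_prod P a hmeas hindep hident M _,
      ← Finset.prod_range_mul_prod_Ico c hN₂ge]
    calc δ + δ = C₁ / 2 := ENNReal.add_halves _
      _ = C₁ * (1 / 2) := by rw [mul_one_div]
      _ ≤ C₁ * ∏ i ∈ Finset.Ico N₁ N₂, c i := mul_le_mul_right hQ C₁
  -- far bound
  have hfar : P (⋃ k : ℕ, (sipE a M (N₂ + k))ᶜ) ≤ δ := by
    refine le_trans (measure_iUnion_le _) ?_
    calc ∑' k, P ((sipE a M (N₂ + k))ᶜ) = ∑' k, r (N₂ + k) := tsum_congr fun k => hEc M _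
      _ = ∑' k, r (k + N₂) := tsum_congr fun k => by rw [add_comm]
      _ ≤ δ := hN₂δ.le
  -- combine
  have hsub : (⋂ i ∈ Finset.range N₂, sipE a M i) \ (⋃ k : ℕ, (sipE a M (N₂ + k))ᶜ)
      ⊆ sipB a M := by
    rintro ω ⟨h1', h2'⟩
    have h2'' : ∀ k : ℕ, ω ∈ sipE a M (N₂ + k) := by
      intro k
      by_contra hk
      exact h2' (Set.mem_iUnion.mpr ⟨k, hk⟩)
    refine Set.mem_iInter.mpr fun i => ?_
    by_cases hi : i < N₂
    · exact Set.mem_iInter₂.mp h1' i (Finset.mem_range.mpr hi)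
    · have : N₂ + (i - N₂) = i := by omega
      exact this ▸ h2'' (i - N₂)
  calc δ = (δ + δ) - δ := (ENNReal.add_sub_cancel_right hδtop).symm
    _ ≤ P (⋂ i ∈ Finset.range N₂, sipE a M i) - P (⋃ k : ℕ, (sipE a M (N₂ + k))ᶜ) :=
        tsub_le_tsub hhead hfar
    _ ≤ P ((⋂ i ∈ Finset.range N₂, sipE a M i) \ (⋃ k : ℕ, (sipE a M (N₂ + k))ᶜ)) := by
        rw [tsub_le_iff_right]
        exact le_trans (measure_mono (Set.subset_diff_union _ _)) (measure_union_le _ _)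
    _ ≤ P (sipB a M) := measure_mono hsub


lemma SIP_G_one (hmeas : ∀ n, Measurable (a n))
    (hindep : iIndepFun a P)
    (hident : ∀ n, Measure.map (a n) P = Measure.map (a 0) P)
    (hmean : ∫⁻ ω, (a 0 ω : ℝ≥0∞) ∂P < ⊤)
    (h1 : 0 < P {ω | a 0 ω = 1}) :
    P (sipG a) = 1 := by
  obtain ⟨δ, hδ0, hδB⟩ := SIP_B_lower P a hmeas hindep hident hmean h1
  have hBmeas : ∀ M : ℤ, MeasurableSet (sipB a M) :=
    fun M => MeasurableSet.iInter fun i => sipE_meas hmeas M i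
  have hUmeas : ∀ M₀ : ℤ, MeasurableSet (sipU a M₀) :=
    fun M₀ => MeasurableSet.iUnion fun M => MeasurableSet.iUnion fun _ => hBmeas M
  have hGmeas : MeasurableSet (sipG a) := MeasurableSet.iInter fun M₀ => hUmeas M₀
  have hBU : ∀ M₀ : ℤ, sipB a (M₀ - 1) ⊆ sipU a M₀ := by
    intro M₀ ω hω
    exact Set.mem_iUnion.mpr ⟨M₀ - 1, Set.mem_iUnion.mpr ⟨by omega, hω⟩⟩
  have hGlow : δ ≤ P (sipG a) := by
    rw [sipG_eq a 0]
    rw [Directed.measure_iInter (fun k => (hUmeas _).nullMeasurableSet)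
      (fun k l => ⟨max k l, sipU_mono (by have := le_max_left k l; push_cast; omega),
        sipU_mono (by have := le_max_right k l; push_cast; omega)⟩)
      ⟨0, measure_ne_top P _⟩]
    exact le_iInf fun k => le_trans (hδB _) (measure_mono (hBU _))
  have h01 := measure_zero_or_one_of_measurableSet_limsup_atBot
    (s := fun q : ℤ => MeasurableSpace.comap (a q) inferInstance)
    (fun q => (hmeas q).comap_le) hindep.iIndep (t := sipG a) ?_
  · rcases h01 with h0 | hone
    · rw [h0] at hGlow
      exact absurd (le_zero_iff.mp hGlow) hδ0
    · exact hone
  · rw [Filter.limsup_eq]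
    refine MeasurableSpace.measurableSet_sInf.mpr fun m hm => ?_
    simp only [Set.mem_setOf_eq, eventually_atBot] at hm
    obtain ⟨N, hN⟩ := hm
    have hE : ∀ (M : ℤ) (i : ℕ), M - 2 - (i : ℤ) ≤ N → MeasurableSet[m] (sipE a M i) := by
      intro M i hMi
      exact hN _ hMi _ ⟨{k | k ≤ i + 1}, trivial, rfl⟩
    rw [sipG_eq a N]
    refine MeasurableSet.iInter fun k => ?_
    refine MeasurableSet.iUnion fun M => ?_
    refine MeasurableSet.iUnion fun hM => ?_
    refine MeasurableSet.iInter fun i => ?_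
    exact hE M i (by omega)

end ProbPart


/-- Almost surely, the set `S` of successful integers is unbounded
above and unbounded below in `ℤ`, is stable under `f` (if `n ∈ S` then `f(n) ∈ S`),
and is totally ordered by ancestry: for any two successful integers `k < k'` there
exists `j ≥ 0` with `f^j(k) = k'`. (Thus the successful integers form the unique
bi-infinite path of the tree `T^f`.) -/
theorem successful_integers_biinfinite_path
    {Ω : Type*} [MeasurableSpace Ω] (P : Measure Ω) [IsProbabilityMeasure P]
    (a : ℤ → Ω → ℕ) (hmeas : ∀ n, Measurable (a n)) (hpos : ∀ n ω, 1 ≤ a n ω)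
    (hindep : iIndepFun a P)
    (hident : ∀ n, Measure.map (a n) P = Measure.map (a 0) P)
    (hmean : ∫⁻ ω, (a 0 ω : ℝ≥0∞) ∂P < ⊤)
    (h1 : 0 < P {ω | a 0 ω = 1}) :
    ∀ᵐ ω ∂P,
      (∀ M : ℤ, ∃ k ∈ successfulSet a ω, M < k) ∧
      (∀ M : ℤ, ∃ k ∈ successfulSet a ω, k < M) ∧
      (∀ n ∈ successfulSet a ω, genMap a ω n ∈ successfulSet a ω) ∧
      (∀ k ∈ successfulSet a ω, ∀ k' ∈ successfulSet a ω, k < k' →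
        ∃ j : ℕ, (genMap a ω)^[j] k = k') := by
  have hGone : P (sipG a) = 1 := SIP_G_one P a hmeas hindep hident hmean h1
  have hGmeas : MeasurableSet (sipG a) :=
    MeasurableSet.iInter fun M₀ => MeasurableSet.iUnion fun M => MeasurableSet.iUnion fun _ =>
      MeasurableSet.iInter fun i => sipE_meas hmeas M i
  refine MeasureTheory.ae_iff.mpr (measure_mono_null (t := (sipG a)ᶜ) ?_ ?_)
  · intro ω hω
    simp only [Set.mem_setOf_eq] at hω
    intro hG
    exact hω (SIP_main a ω (fun n => hpos n ω) (sipG_prop hG))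
  · rw [prob_compl_eq_zero_iff hGmeas]
    exact hGone
end
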